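/- The real span of the rotational vector fields {Θ^i_{m,n} : i ∈ {1,2}, m, n ≥ 0} is a Lie ideal of the span 𝓛 of {E_{m,n}} ∪ {Θ^i_{m,n}}: for every V in the span of the rotational fields and every W in 𝓛, the bracket [V, W] again lies in the span of the rotational fields. -/

import Mathlib

/-- Lie bracket of vector fields on ℝ⁴: [V,W](x) = DV(x)(W(x)) − DW(x)(V(x)). -/
noncomputable def bracket (V W : (Fin 4 → ℝ) → (Fin 4 → ℝ)) : (Fin 4 → ℝ) → (Fin 4 → ℝ) :=
  fun x => fderiv ℝ V x (W x) - fderiv ℝ W x (V x)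

/-- The Eulerian vector field E₀₀(x) = x. -/
def E00 : (Fin 4 → ℝ) → (Fin 4 → ℝ) := fun x => x

/-- The rotational vector fields Θ¹₀₀(x) = (−y₁, x₁, 0, 0) and Θ²₀₀(x) = (0, 0, −y₂, x₂). -/
def Theta0 (i : Fin 2) : (Fin 4 → ℝ) → (Fin 4 → ℝ) :=
  if i = 0 then (fun x => ![-(x 1), x 0, 0, 0]) else (fun x => ![0, 0, -(x 3), x 2])

/-- Z_{m,n}(x) = (x₁² + y₁²)^m (x₂² + y₂²)^n. -/
def Z (m n : ℕ) : (Fin 4 → ℝ) → ℝ :=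
  fun x => ((x 0) ^ 2 + (x 1) ^ 2) ^ m * ((x 2) ^ 2 + (x 3) ^ 2) ^ n

/-- E_{m,n} = Z_{m,n} · E₀₀. -/
def Emn (m n : ℕ) : (Fin 4 → ℝ) → (Fin 4 → ℝ) := fun x => Z m n x • E00 x

/-- Θ^i_{m,n} = Z_{m,n} · Θ^i₀₀. -/
def Thmn (i : Fin 2) (m n : ℕ) : (Fin 4 → ℝ) → (Fin 4 → ℝ) := fun x => Z m n x • Theta0 i x

/-- The generators of 𝓛: all E_{m,n} and all Θ^i_{m,n}. -/
def lieGens : Set ((Fin 4 → ℝ) → (Fin 4 → ℝ)) :=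
  {V | ∃ m n : ℕ, V = Emn m n} ∪ {V | ∃ (i : Fin 2) (m n : ℕ), V = Thmn i m n}

/-- The rotational generators: all Θ^i_{m,n}. -/
def rotGens : Set ((Fin 4 → ℝ) → (Fin 4 → ℝ)) :=
  {V | ∃ (i : Fin 2) (m n : ℕ), V = Thmn i m n}

theorem hasFDerivAt_pow'' {E : Type*} [NormedAddCommGroup E] [NormedSpace ℝ E]
    {f : E → ℝ} {f' : E →L[ℝ] ℝ} {x : E} (h : HasFDerivAt f f' x) (n : ℕ) :
    HasFDerivAt (fun y => f y ^ n) ((n * f x ^ (n - 1)) • f') x := by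
  induction n with
  | zero => simpa using hasFDerivAt_const (1 : ℝ) x
  | succ k ih =>
    have h2 : HasFDerivAt (fun y => f y ^ k * f y)
        ((f x ^ k) • f' + f x • ((k * f x ^ (k - 1)) • f')) x := ih.mul h
    have e1 : (fun y => f y ^ k * f y) = fun y => f y ^ (k + 1) := by
      funext y; rw [← pow_succ]
    have e2 : (f x ^ k) • f' + f x • ((k * f x ^ (k - 1)) • f')
        = ((↑(k + 1) * f x ^ (k + 1 - 1)) • f') := by
      rw [smul_smul, ← add_smul]
      congr 1
      cases k with
      | zero => simp
      | succ j => push_cast [Nat.succ_sub_one, pow_succ]; ring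
    rw [← e1, ← e2]
    exact h2

noncomputable def pj (j : Fin 4) : (Fin 4 → ℝ) →L[ℝ] ℝ :=
  ContinuousLinearMap.proj (R := ℝ) (φ := fun _ : Fin 4 => ℝ) j

noncomputable def Zd (m n : ℕ) (x : Fin 4 → ℝ) : (Fin 4 → ℝ) →L[ℝ] ℝ :=
  (((x 0) ^ 2 + (x 1) ^ 2) ^ m) •
      ((n * ((x 2) ^ 2 + (x 3) ^ 2) ^ (n - 1)) •
        ((2 * x 2 ^ 1) • pj 2 + (2 * x 3 ^ 1) • pj 3)) +
    (((x 2) ^ 2 + (x 3) ^ 2) ^ n) •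
      ((m * ((x 0) ^ 2 + (x 1) ^ 2) ^ (m - 1)) •
        ((2 * x 0 ^ 1) • pj 0 + (2 * x 1 ^ 1) • pj 1))

theorem hasFDerivAt_proj (j : Fin 4) (x : Fin 4 → ℝ) :
    HasFDerivAt (fun y : Fin 4 → ℝ => y j) (pj j) x :=
  (pj j).hasFDerivAt

theorem hasFDerivAt_Z (m n : ℕ) (x : Fin 4 → ℝ) :
    HasFDerivAt (Z m n) (Zd m n x) x := by
  have h1 := hasFDerivAt_pow'' ((hasFDerivAt_pow'' (hasFDerivAt_proj 0 x) 2).add (hasFDerivAt_pow'' (hasFDerivAt_proj 1 x) 2)) m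
  have h2 := hasFDerivAt_pow'' ((hasFDerivAt_pow'' (hasFDerivAt_proj 2 x) 2).add (hasFDerivAt_pow'' (hasFDerivAt_proj 3 x) 2)) n
  exact h1.mul h2

theorem pj_apply (j : Fin 4) (u : Fin 4 → ℝ) : pj j u = u j := rfl

theorem Zd_apply (m n : ℕ) (x u : Fin 4 → ℝ) :
    Zd m n x u =
      ((x 0) ^ 2 + (x 1) ^ 2) ^ m * (n * ((x 2) ^ 2 + (x 3) ^ 2) ^ (n - 1)) *
          (2 * x 2 * u 2 + 2 * x 3 * u 3) +
        ((x 2) ^ 2 + (x 3) ^ 2) ^ n * (m * ((x 0) ^ 2 + (x 1) ^ 2) ^ (m - 1)) *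
          (2 * x 0 * u 0 + 2 * x 1 * u 1) := by
  simp [Zd, ContinuousLinearMap.add_apply, ContinuousLinearMap.smul_apply, pj_apply, smul_eq_mul]
  ring

noncomputable def Tc (i : Fin 2) : (Fin 4 → ℝ) →L[ℝ] (Fin 4 → ℝ) :=
  if i = 0 then ContinuousLinearMap.pi ![-(pj 1), pj 0, 0, 0]
  else ContinuousLinearMap.pi ![0, 0, -(pj 3), pj 2]

theorem Tc_apply (i : Fin 2) (x : Fin 4 → ℝ) : Tc i x = Theta0 i x := by
  fin_cases i <;> (funext j; fin_cases j) <;>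
    simp [Tc, Theta0, ContinuousLinearMap.pi_apply, pj_apply]

theorem hasFDerivAt_Thmn (i : Fin 2) (m n : ℕ) (x : Fin 4 → ℝ) :
    HasFDerivAt (Thmn i m n)
      (Z m n x • Tc i + (Zd m n x).smulRight (Theta0 i x)) x := by
  have h : HasFDerivAt (fun y => Z m n y • Tc i y)
      (Z m n x • Tc i + (Zd m n x).smulRight (Tc i x)) x :=
    (hasFDerivAt_Z m n x).smul (Tc i).hasFDerivAt
  have e : (fun y => Z m n y • Tc i y) = Thmn i m n := by
    funext y; rw [Thmn, Tc_apply]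
  rw [e, Tc_apply] at h
  exact h

theorem hasFDerivAt_Emn (m n : ℕ) (x : Fin 4 → ℝ) :
    HasFDerivAt (Emn m n)
      (Z m n x • ContinuousLinearMap.id ℝ (Fin 4 → ℝ) + (Zd m n x).smulRight x) x := by
  have h : HasFDerivAt (fun y => Z m n y • (ContinuousLinearMap.id ℝ (Fin 4 → ℝ)) y)
      (Z m n x • ContinuousLinearMap.id ℝ (Fin 4 → ℝ)
        + (Zd m n x).smulRight ((ContinuousLinearMap.id ℝ (Fin 4 → ℝ)) x)) x :=
    (hasFDerivAt_Z m n x).smul (ContinuousLinearMap.id ℝ (Fin 4 → ℝ)).hasFDerivAt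
  exact h

theorem fderiv_Thmn (i : Fin 2) (m n : ℕ) (x : Fin 4 → ℝ) :
    fderiv ℝ (Thmn i m n) x = Z m n x • Tc i + (Zd m n x).smulRight (Theta0 i x) :=
  (hasFDerivAt_Thmn i m n x).fderiv

theorem fderiv_Emn (m n : ℕ) (x : Fin 4 → ℝ) :
    fderiv ℝ (Emn m n) x
      = Z m n x • ContinuousLinearMap.id ℝ (Fin 4 → ℝ) + (Zd m n x).smulRight x :=
  (hasFDerivAt_Emn m n x).fderiv

theorem cast_mul_pow_sub (k : ℕ) (a : ℝ) : (k : ℝ) * a ^ (k - 1) * a = k * a ^ k := by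
  cases k with
  | zero => simp
  | succ j => push_cast [Nat.succ_sub_one, pow_succ]; ring

theorem Zd_apply_Theta0 (m n : ℕ) (i : Fin 2) (x : Fin 4 → ℝ) :
    Zd m n x (Theta0 i x) = 0 := by
  fin_cases i
  · rw [Zd_apply]
    show ((x 0) ^ 2 + (x 1) ^ 2) ^ m * (n * ((x 2) ^ 2 + (x 3) ^ 2) ^ (n - 1)) *
          (2 * x 2 * 0 + 2 * x 3 * 0) +
        ((x 2) ^ 2 + (x 3) ^ 2) ^ n * (m * ((x 0) ^ 2 + (x 1) ^ 2) ^ (m - 1)) *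
          (2 * x 0 * -(x 1) + 2 * x 1 * x 0) = 0
    ring
  · rw [Zd_apply]
    show ((x 0) ^ 2 + (x 1) ^ 2) ^ m * (n * ((x 2) ^ 2 + (x 3) ^ 2) ^ (n - 1)) *
          (2 * x 2 * -(x 3) + 2 * x 3 * x 2) +
        ((x 2) ^ 2 + (x 3) ^ 2) ^ n * (m * ((x 0) ^ 2 + (x 1) ^ 2) ^ (m - 1)) *
          (2 * x 0 * 0 + 2 * x 1 * 0) = 0
    ring

theorem Zd_apply_self (m n : ℕ) (x : Fin 4 → ℝ) :
    Zd m n x x = 2 * (m + n : ℝ) * Z m n x := by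
  rw [Zd_apply, Z]
  have h1 := cast_mul_pow_sub m ((x 0) ^ 2 + (x 1) ^ 2)
  have h2 := cast_mul_pow_sub n ((x 2) ^ 2 + (x 3) ^ 2)
  linear_combination 2 * ((x 0) ^ 2 + (x 1) ^ 2) ^ m * h2 + 2 * ((x 2) ^ 2 + (x 3) ^ 2) ^ n * h1

theorem Z_mul (m n p q : ℕ) (x : Fin 4 → ℝ) :
    Z m n x * Z p q x = Z (m + p) (n + q) x := by
  simp [Z, pow_add]; ring

theorem Tc_comm (i j : Fin 2) (x : Fin 4 → ℝ) : Tc i (Tc j x) = Tc j (Tc i x) := by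
  fin_cases i <;> fin_cases j <;> (funext k; fin_cases k) <;>
    simp [Tc, ContinuousLinearMap.pi_apply, pj_apply]

theorem bracket_Thmn_Thmn (i j : Fin 2) (m n p q : ℕ) :
    (fun x => fderiv ℝ (Thmn i m n) x (Thmn j p q x)
      - fderiv ℝ (Thmn j p q) x (Thmn i m n x)) = 0 := by
  funext x
  rw [fderiv_Thmn, fderiv_Thmn]
  simp only [ContinuousLinearMap.add_apply, ContinuousLinearMap.smul_apply,
    ContinuousLinearMap.smulRight_apply]
  have hz1 : Zd m n x (Thmn j p q x) = 0 := by
    rw [Thmn, map_smul, Zd_apply_Theta0, smul_zero]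
  have hz2 : Zd p q x (Thmn i m n x) = 0 := by
    rw [Thmn, map_smul, Zd_apply_Theta0, smul_zero]
  rw [hz1, hz2]
  have h1 : Tc i (Thmn j p q x) = Z p q x • Tc i (Tc j x) := by
    rw [Thmn, ← Tc_apply, map_smul]
  have h2 : Tc j (Thmn i m n x) = Z m n x • Tc j (Tc i x) := by
    rw [Thmn, ← Tc_apply, map_smul]
  rw [h1, h2, Tc_comm]
  simp [smul_smul, mul_comm]

theorem bracket_Thmn_Emn (i : Fin 2) (m n p q : ℕ) :
    (fun x => fderiv ℝ (Thmn i m n) x (Emn p q x)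
      - fderiv ℝ (Emn p q) x (Thmn i m n x))
      = (2 * (m + n : ℝ)) • Thmn i (m + p) (n + q) := by
  funext x
  rw [fderiv_Thmn, fderiv_Emn]
  simp only [ContinuousLinearMap.add_apply, ContinuousLinearMap.smul_apply,
    ContinuousLinearMap.smulRight_apply, ContinuousLinearMap.id_apply, Pi.smul_apply]
  have hz2 : Zd p q x (Thmn i m n x) = 0 := by
    rw [Thmn, map_smul, Zd_apply_Theta0, smul_zero]
  have hz1 : Zd m n x (Emn p q x) = Z p q x * (2 * (m + n : ℝ) * Z m n x) := by
    rw [Emn, E00, map_smul, Zd_apply_self, smul_eq_mul]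
  have h1 : Tc i (Emn p q x) = Z p q x • Theta0 i x := by
    rw [Emn, E00, ← Tc_apply, map_smul, Tc_apply]
  rw [h1, hz1, hz2]
  simp only [Thmn, Pi.smul_apply, smul_smul, zero_smul, ← Z_mul m n p q x, smul_eq_mul]
  module

def diffSub : Submodule ℝ ((Fin 4 → ℝ) → (Fin 4 → ℝ)) where
  carrier := {f | Differentiable ℝ f}
  add_mem' := fun hf hg => hf.add hg
  zero_mem' := fun x => (hasFDerivAt_const (0 : Fin 4 → ℝ) x).differentiableAt
  smul_mem' := fun c f hf => hf.const_smul c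

theorem diff_Thmn (i : Fin 2) (m n : ℕ) : Differentiable ℝ (Thmn i m n) :=
  fun x => (hasFDerivAt_Thmn i m n x).differentiableAt

theorem diff_Emn (m n : ℕ) : Differentiable ℝ (Emn m n) :=
  fun x => (hasFDerivAt_Emn m n x).differentiableAt

theorem diff_span_lie {U : (Fin 4 → ℝ) → (Fin 4 → ℝ)}
    (h : U ∈ Submodule.span ℝ lieGens) : Differentiable ℝ U := by
  have hle : Submodule.span ℝ lieGens ≤ diffSub := by
    rw [Submodule.span_le]
    rintro f (⟨m, n, rfl⟩ | ⟨i, m, n, rfl⟩)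
    · exact diff_Emn m n
    · exact diff_Thmn i m n
  exact hle h

theorem rot_le_lie : Submodule.span ℝ rotGens ≤ Submodule.span ℝ lieGens :=
  Submodule.span_mono (Set.subset_union_right)

theorem bracket_zero_left (W : (Fin 4 → ℝ) → (Fin 4 → ℝ)) : bracket 0 W = 0 := by
  funext x
  have h0 : fderiv ℝ (0 : (Fin 4 → ℝ) → (Fin 4 → ℝ)) x = 0 :=
    (hasFDerivAt_const (0 : Fin 4 → ℝ) x).fderiv
  simp [bracket, h0]

theorem bracket_zero_right (V : (Fin 4 → ℝ) → (Fin 4 → ℝ)) : bracket V 0 = 0 := by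
  funext x
  have h0 : fderiv ℝ (0 : (Fin 4 → ℝ) → (Fin 4 → ℝ)) x = 0 :=
    (hasFDerivAt_const (0 : Fin 4 → ℝ) x).fderiv
  simp [bracket, h0]

theorem bracket_add_left {V V' : (Fin 4 → ℝ) → (Fin 4 → ℝ)} (W : (Fin 4 → ℝ) → (Fin 4 → ℝ))
    (hV : Differentiable ℝ V) (hV' : Differentiable ℝ V') :
    bracket (V + V') W = bracket V W + bracket V' W := by
  funext x
  have h : fderiv ℝ (V + V') x = fderiv ℝ V x + fderiv ℝ V' x :=
    fderiv_add (hV x) (hV' x)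
  simp only [bracket, h, Pi.add_apply, ContinuousLinearMap.add_apply, map_add]
  abel

theorem bracket_smul_left {V : (Fin 4 → ℝ) → (Fin 4 → ℝ)} (c : ℝ) (W : (Fin 4 → ℝ) → (Fin 4 → ℝ))
    (hV : Differentiable ℝ V) :
    bracket (c • V) W = c • bracket V W := by
  funext x
  have h : fderiv ℝ (c • V) x = c • fderiv ℝ V x := fderiv_const_smul (hV x) c
  simp only [bracket, h, Pi.smul_apply, ContinuousLinearMap.smul_apply, map_smul, smul_sub]

theorem bracket_add_right {W W' : (Fin 4 → ℝ) → (Fin 4 → ℝ)} (V : (Fin 4 → ℝ) → (Fin 4 → ℝ))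
    (hW : Differentiable ℝ W) (hW' : Differentiable ℝ W') :
    bracket V (W + W') = bracket V W + bracket V W' := by
  funext x
  have h : fderiv ℝ (W + W') x = fderiv ℝ W x + fderiv ℝ W' x :=
    fderiv_add (hW x) (hW' x)
  simp only [bracket, h, Pi.add_apply, ContinuousLinearMap.add_apply, map_add]
  abel

theorem bracket_smul_right {W : (Fin 4 → ℝ) → (Fin 4 → ℝ)} (c : ℝ) (V : (Fin 4 → ℝ) → (Fin 4 → ℝ))
    (hW : Differentiable ℝ W) :
    bracket V (c • W) = c • bracket V W := by
  funext x
  have h : fderiv ℝ (c • W) x = c • fderiv ℝ W x := fderiv_const_smul (hW x) c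
  simp only [bracket, h, Pi.smul_apply, ContinuousLinearMap.smul_apply, map_smul, smul_sub]

/-- the span of the rotational fields is a Lie ideal of 𝓛. -/
theorem rotational_span_is_ideal (V W : (Fin 4 → ℝ) → (Fin 4 → ℝ))
    (hV : V ∈ Submodule.span ℝ rotGens) (hW : W ∈ Submodule.span ℝ lieGens) :
    bracket V W ∈ Submodule.span ℝ rotGens := by
  induction hV using Submodule.span_induction with
  | mem v hv =>
    obtain ⟨i, m, n, rfl⟩ := hv
    induction hW using Submodule.span_induction with
    | mem w hw =>
      rcases hw with ⟨p, q, rfl⟩ | ⟨j, p, q, rfl⟩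
      · rw [show bracket (Thmn i m n) (Emn p q) = (2 * (m + n : ℝ)) • Thmn i (m + p) (n + q)
          from bracket_Thmn_Emn i m n p q]
        exact Submodule.smul_mem _ _ (Submodule.subset_span ⟨i, m + p, n + q, rfl⟩)
      · rw [show bracket (Thmn i m n) (Thmn j p q) = 0 from bracket_Thmn_Thmn i j m n p q]
        exact Submodule.zero_mem _
    | zero => rw [bracket_zero_right]; exact Submodule.zero_mem _
    | add w w' hw hw' ih ih' =>
      rw [bracket_add_right _ (diff_span_lie hw) (diff_span_lie hw')]
      exact Submodule.add_mem _ ih ih'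
    | smul c w hw ih =>
      rw [bracket_smul_right c _ (diff_span_lie hw)]
      exact Submodule.smul_mem _ _ ih
  | zero => rw [bracket_zero_left]; exact Submodule.zero_mem _
  | add v v' hv hv' ih ih' =>
    rw [bracket_add_left _ (diff_span_lie (rot_le_lie hv)) (diff_span_lie (rot_le_lie hv'))]
    exact Submodule.add_mem _ ih ih'
  | smul c v hv ih =>
    rw [bracket_smul_left c _ (diff_span_lie (rot_le_lie hv))]
    exact Submodule.smul_mem _ _ ih
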